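/- For the two-valued random variable X_ε with P(X_ε = 0) = 1-ε and P(X_ε = m/ε) = ε (where m > 0 and 0 < ε < 1), which has mean m, one has T(X_ε) = 1 - ε; consequently sup over probability measures on [0,∞) with positive mean of T equals 1 and is not attained. -/

import Mathlib

open MeasureTheory Complex

/-- Fourier transform `f̂(ξ) = ∫ e^{-iξx} dF(x)` of a measure on `ℝ`. -/
noncomputable def ft (μ : Measure ℝ) (ξ : ℝ) : ℂ :=
  ∫ x, Complex.exp (-(Complex.I * ξ * x)) ∂μ

/-- Derivative of the Fourier transform: `f̂'(ξ) = -i ∫ x e^{-iξx} dF(x)`. -/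
noncomputable def ft' (μ : Measure ℝ) (ξ : ℝ) : ℂ :=
  ∫ x, -(Complex.I * x) * Complex.exp (-(Complex.I * ξ * x)) ∂μ

/-- The Fourier-based inequality index `T(F) = (1/2) sup_ξ |f̂(ξ) - f̂'(ξ)/f̂'(0)|`. -/
noncomputable def Tindex (μ : Measure ℝ) : ℝ :=
  (1 / 2) * ⨆ ξ : ℝ, ‖ft μ ξ - ft' μ ξ / ft' μ 0‖

lemma norm_exp_eq (ξ x : ℝ) : ‖Complex.exp (-(Complex.I * ξ * x))‖ = 1 := by
  simp [Complex.norm_exp]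

lemma integrable_dirac {E : Type*} [NormedAddCommGroup E] (f : ℝ → E) (a : ℝ) :
    Integrable f (Measure.dirac a) := by
  refine (integrable_const (f a)).congr ?_
  rw [MeasureTheory.ae_dirac_eq]
  exact Filter.eventually_pure.2 rfl

lemma integral_two {E : Type*} [NormedAddCommGroup E] [NormedSpace ℝ E] [CompleteSpace E]
    {ε : ℝ} (hε0 : 0 < ε) (hε1 : ε < 1) (f : ℝ → E) (a : ℝ) :
    ∫ x, f x ∂(ENNReal.ofReal (1 - ε) • Measure.dirac (0:ℝ) + ENNReal.ofReal ε • Measure.dirac a)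
      = (1 - ε) • f 0 + ε • f a := by
  rw [integral_add_measure ((integrable_dirac f 0).smul_measure ENNReal.ofReal_ne_top)
      ((integrable_dirac f a).smul_measure ENNReal.ofReal_ne_top),
    integral_smul_measure, integral_smul_measure, integral_dirac, integral_dirac,
    ENNReal.toReal_ofReal (by linarith), ENNReal.toReal_ofReal hε0.le]


lemma two_point_T (m ε : ℝ) (hm : 0 < m) (hε : ε ∈ Set.Ioo (0 : ℝ) 1) :
    Tindex (ENNReal.ofReal (1 - ε) • Measure.dirac (0 : ℝ)
        + ENNReal.ofReal ε • Measure.dirac (m / ε)) = 1 - ε := by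
  obtain ⟨hε0, hε1⟩ := hε
  set a := m / ε with ha
  have ha0 : 0 < a := div_pos hm hε0
  set μ := ENNReal.ofReal (1 - ε) • Measure.dirac (0 : ℝ)
        + ENNReal.ofReal ε • Measure.dirac a with hμ
  have hft : ∀ ξ : ℝ, ft μ ξ = (1 - ε) + ε * Complex.exp (-(Complex.I * ξ * a)) := by
    intro ξ
    rw [ft, integral_two hε0 hε1]
    push_cast
    ring_nf
    simp
    ring
  have hft' : ∀ ξ : ℝ, ft' μ ξ = -Complex.I * m * Complex.exp (-(Complex.I * ξ * a)) := by
    intro ξ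
    rw [ft', integral_two hε0 hε1]
    have hεne : (ε:ℂ) ≠ 0 := by exact_mod_cast hε0.ne'
    have h : (a : ℂ) * ε = m := by
      rw [ha]; push_cast; field_simp
    simp only [Complex.ofReal_zero, mul_zero, zero_mul, neg_zero, Complex.exp_zero,
      smul_zero, zero_add, Complex.real_smul]
    linear_combination (-Complex.I) * Complex.exp (-(Complex.I * ξ * a)) * h
  have hft'0 : ft' μ 0 = -Complex.I * m := by
    rw [hft' 0]
    simp
  have hg : ∀ ξ : ℝ, ft μ ξ - ft' μ ξ / ft' μ 0
      = (1 - ε) * (1 - Complex.exp (-(Complex.I * ξ * a))) := by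
    intro ξ
    rw [hft, hft', hft'0]
    have h1 : (-Complex.I * m : ℂ) ≠ 0 := by
      simp [Complex.ext_iff, hm.ne']
    rw [mul_div_cancel_left₀ _ h1]
    ring
  have hnorm : ∀ ξ : ℝ, ‖ft μ ξ - ft' μ ξ / ft' μ 0‖
      = (1 - ε) * ‖1 - Complex.exp (-(Complex.I * ξ * a))‖ := by
    intro ξ
    rw [hg, norm_mul]
    congr 1
    rw [show (1 - (ε:ℂ)) = ((1 - ε : ℝ) : ℂ) by push_cast; ring,
      Complex.norm_real, Real.norm_eq_abs]
    exact abs_of_nonneg (by linarith)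
  have hsup : (⨆ ξ : ℝ, ‖ft μ ξ - ft' μ ξ / ft' μ 0‖) = (1 - ε) * 2 := by
    apply le_antisymm
    · apply ciSup_le
      intro ξ
      rw [hnorm]
      have : ‖1 - Complex.exp (-(Complex.I * ξ * a))‖ ≤ 2 := by
        calc ‖1 - Complex.exp (-(Complex.I * ξ * a))‖
            ≤ ‖(1:ℂ)‖ + ‖Complex.exp (-(Complex.I * ξ * a))‖ := norm_sub_le _ _
          _ ≤ 2 := by rw [norm_one, norm_exp_eq]; norm_num
      nlinarith
    · have key : ‖ft μ (Real.pi / a) - ft' μ (Real.pi / a) / ft' μ 0‖ = (1 - ε) * 2 := by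
        rw [hnorm]
        have : (Complex.I * (Real.pi / a : ℝ) * a) = Complex.I * Real.pi := by
          push_cast
          have : (a:ℂ) ≠ 0 := by exact_mod_cast ha0.ne'
          field_simp
        rw [this]
        have : Complex.exp (-(Complex.I * Real.pi)) = -1 := by
          rw [Complex.exp_neg, mul_comm, Complex.exp_pi_mul_I]
          norm_num
        rw [this]
        norm_num
      rw [← key]
      refine le_ciSup (f := fun ξ : ℝ => ‖ft μ ξ - ft' μ ξ / ft' μ 0‖) ⟨(1 - ε) * 2, ?_⟩ (Real.pi / a)
      rintro y ⟨ξ, rfl⟩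
      dsimp only
      rw [hnorm]
      have : ‖1 - Complex.exp (-(Complex.I * ξ * a))‖ ≤ 2 := by
        calc ‖1 - Complex.exp (-(Complex.I * ξ * a))‖
            ≤ ‖(1:ℂ)‖ + ‖Complex.exp (-(Complex.I * ξ * a))‖ := norm_sub_le _ _
          _ ≤ 2 := by rw [norm_one, norm_exp_eq]; norm_num
      nlinarith
  rw [Tindex, hsup]
  ring

lemma T_lt_one (μ : Measure ℝ) (h1 : IsProbabilityMeasure μ) (h2 : μ {x : ℝ | x < 0} = 0)
    (h3 : Integrable (fun x : ℝ => x) μ) (h4 : 0 < ∫ x, x ∂μ) : Tindex μ < 1 := by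
  set M := ∫ x, x ∂μ with hMdef
  have hM : 0 < M := h4
  have hxnn : ∀ᵐ x ∂μ, 0 ≤ x := by
    rw [ae_iff]
    convert h2 using 2
    ext x; simp [not_le]
  have hE : ∀ ξ : ℝ, Integrable (fun x : ℝ => Complex.exp (-(Complex.I * ξ * x))) μ := by
    intro ξ
    refine (integrable_const (1:ℝ)).mono' ?_ ?_
    · apply Continuous.aestronglyMeasurable; continuity
    · filter_upwards with x; rw [norm_exp_eq]
  have hxE : ∀ ξ : ℝ, Integrable (fun x : ℝ => (x : ℂ) * Complex.exp (-(Complex.I * ξ * x))) μ := by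
    intro ξ
    refine h3.norm.mono' ?_ ?_
    · apply Continuous.aestronglyMeasurable; continuity
    · filter_upwards with x
      rw [norm_mul, norm_exp_eq, mul_one, Complex.norm_real, Real.norm_eq_abs]
  have hft'0 : ft' μ 0 = -Complex.I * M := by
    rw [ft']
    have key : ∀ x : ℝ, -(Complex.I * x) * Complex.exp (-(Complex.I * (0:ℝ) * x))
        = (-Complex.I) * (x:ℂ) := by
      intro x; simp
    rw [integral_congr_ae (Filter.Eventually.of_forall key), integral_const_mul]
    congr 1
    exact integral_ofReal (f := fun x : ℝ => x)
  have hMne : (M : ℂ) ≠ 0 := by exact_mod_cast hM.ne'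
  have hg : ∀ ξ : ℝ, ft μ ξ - ft' μ ξ / ft' μ 0
      = ∫ x, (1 - (x:ℂ)/M) * Complex.exp (-(Complex.I * ξ * x)) ∂μ := by
    intro ξ
    have key : ∀ x : ℝ, -(Complex.I * x) * Complex.exp (-(Complex.I * ξ * x)) * (-Complex.I * M)⁻¹
        = ((x:ℂ)/M) * Complex.exp (-(Complex.I * ξ * x)) := by
      intro x
      have hI := Complex.I_ne_zero
      field_simp
    have hdivE : Integrable (fun x : ℝ => ((x:ℂ)/M) * Complex.exp (-(Complex.I * ξ * x))) μ := by
      refine ((hxE ξ).const_mul ((M:ℂ)⁻¹)).congr ?_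
      filter_upwards with x
      ring
    rw [ft, ft', hft'0, div_eq_mul_inv, ← integral_mul_const,
      integral_congr_ae (Filter.Eventually.of_forall key),
      ← integral_sub (hE ξ) hdivE]
    congr 1; ext x; ring
  have habs : ∀ ξ : ℝ, ‖ft μ ξ - ft' μ ξ / ft' μ 0‖ ≤ ∫ x, |1 - x/M| ∂μ := by
    intro ξ
    rw [hg]
    refine (norm_integral_le_integral_norm _).trans_eq ?_
    refine integral_congr_ae (Filter.Eventually.of_forall fun x => ?_)
    show ‖(1 - (x:ℂ)/(M:ℂ)) * Complex.exp (-(Complex.I * ξ * x))‖ = |1 - x/M|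
    rw [norm_mul, norm_exp_eq, mul_one,
      show (1 - (x:ℂ)/(M:ℂ)) = ((1 - x/M : ℝ) : ℂ) by push_cast; ring,
      Complex.norm_real, Real.norm_eq_abs]
  -- integrability of real integrands
  have hdiv : Integrable (fun x : ℝ => x / M) μ := h3.div_const M
  have habsint : Integrable (fun x : ℝ => |1 - x/M|) μ :=
    ((integrable_const (1:ℝ)).sub hdiv).abs
  have hminint : Integrable (fun x : ℝ => min 1 (x/M)) μ := by
    refine (show Integrable (fun x : ℝ => 1 + |x / M|) μ from
        (integrable_const (1:ℝ)).add hdiv.abs).mono' ?_ ?_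
    · exact (continuous_const.min ((continuous_id (X := ℝ)).div_const M)).aestronglyMeasurable
    · filter_upwards with x
      rw [Real.norm_eq_abs]
      rcases le_total (1:ℝ) (x/M) with h | h
      · rw [min_eq_left h, abs_one]
        linarith [abs_nonneg (x/M)]
      · rw [min_eq_right h]
        have h2 := le_abs_self (x/M)
        have h3 := neg_abs_le (x/M)
        rw [abs_le]
        constructor <;> linarith
  set J := ∫ x, min 1 (x/M) ∂μ with hJdef
  have hJnn : 0 ≤ J := by
    refine integral_nonneg_of_ae ?_
    filter_upwards [hxnn] with x hx
    exact le_min one_pos.le (div_nonneg hx hM.le)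
  have hJpos : 0 < J := by
    rcases hJnn.lt_or_eq with h | h
    · exact h
    · exfalso
      have hz : (fun x : ℝ => min 1 (x/M)) =ᵐ[μ] 0 := by
        refine (integral_eq_zero_iff_of_nonneg_ae ?_ hminint).mp h.symm
        filter_upwards [hxnn] with x hx
        exact le_min one_pos.le (div_nonneg hx hM.le)
      have hx0 : (fun x : ℝ => x) =ᵐ[μ] 0 := by
        filter_upwards [hz, hxnn] with x hx hxn
        simp only [Pi.zero_apply] at hx ⊢
        by_contra hne
        have hxpos : 0 < x := lt_of_le_of_ne hxn (Ne.symm hne)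
        have : 0 < min 1 (x/M) := lt_min one_pos (div_pos hxpos hM)
        linarith
      have : M = 0 := by
        rw [hMdef, integral_congr_ae hx0]; simp
      linarith
  have hDval : ∫ x, |1 - x/M| ∂μ = 2 - 2 * J := by
    have key : ∀ x : ℝ, |1 - x/M| = 1 + x/M - 2 * min 1 (x/M) := by
      intro x
      rcases le_total (x/M) 1 with h | h
      · rw [min_eq_right h, _root_.abs_of_nonneg (by linarith)]; ring
      · rw [min_eq_left h, _root_.abs_of_nonpos (by linarith)]; ring
    rw [integral_congr_ae (Filter.Eventually.of_forall key)]
    rw [integral_sub (show Integrable (fun x : ℝ => 1 + x / M) μ from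
        (integrable_const (1:ℝ)).add hdiv) (hminint.const_mul 2),
      integral_add (integrable_const (1:ℝ)) hdiv, integral_const, integral_const_mul]
    have : ∫ x, x / M ∂μ = 1 := by
      rw [integral_div, ← hMdef, div_self hM.ne']
    rw [this]
    simp [h1.measure_univ]
    norm_num
    exact hJdef.symm
  have hD2 : ∫ x, |1 - x/M| ∂μ < 2 := by rw [hDval]; linarith
  have hsup : (⨆ ξ : ℝ, ‖ft μ ξ - ft' μ ξ / ft' μ 0‖) ≤ ∫ x, |1 - x/M| ∂μ :=
    ciSup_le habs
  rw [Tindex]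
  calc (1/2 : ℝ) * ⨆ ξ : ℝ, ‖ft μ ξ - ft' μ ξ / ft' μ 0‖
      ≤ (1/2) * ∫ x, |1 - x/M| ∂μ := by linarith
    _ < 1 := by linarith

lemma two_point_mem (m ε : ℝ) (hm : 0 < m) (hε : ε ∈ Set.Ioo (0 : ℝ) 1) :
    (1 - ε) ∈ {t : ℝ | ∃ μ : Measure ℝ, IsProbabilityMeasure μ ∧ μ {x : ℝ | x < 0} = 0 ∧
        Integrable (fun x : ℝ => x) μ ∧ 0 < ∫ x, x ∂μ ∧ t = Tindex μ} := by
  obtain ⟨hε0, hε1⟩ := hε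
  have ha0 : 0 < m / ε := div_pos hm hε0
  refine ⟨ENNReal.ofReal (1 - ε) • Measure.dirac (0 : ℝ)
      + ENNReal.ofReal ε • Measure.dirac (m / ε), ?_, ?_, ?_, ?_, ?_⟩
  · constructor
    rw [Measure.add_apply, Measure.smul_apply, Measure.smul_apply]
    simp only [measure_univ, smul_eq_mul, mul_one]
    rw [← ENNReal.ofReal_add (by linarith) hε0.le]
    norm_num
  · have hmeas : MeasurableSet {x : ℝ | x < 0} := measurableSet_Iio
    rw [Measure.add_apply, Measure.smul_apply, Measure.smul_apply,
      Measure.dirac_apply' _ hmeas, Measure.dirac_apply' _ hmeas]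
    have h1 : (0:ℝ) ∉ {x : ℝ | x < 0} := by simp
    have h2 : (m / ε) ∉ {x : ℝ | x < 0} := by simp [le_of_lt ha0]
    rw [Set.indicator_of_notMem h1, Set.indicator_of_notMem h2]
    simp
  · exact ((integrable_dirac _ 0).smul_measure ENNReal.ofReal_ne_top).add_measure
      ((integrable_dirac _ (m/ε)).smul_measure ENNReal.ofReal_ne_top)
  · rw [integral_two hε0 hε1 (fun x : ℝ => x) (m/ε)]
    have : (1 - ε) • (0:ℝ) + ε • (m / ε) = m := by
      simp only [smul_eq_mul, mul_zero, zero_add]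
      field_simp
    rw [this]
    exact hm
  · rw [two_point_T m ε hm ⟨hε0, hε1⟩]

theorem stmt_8 (m ε : ℝ) (hm : 0 < m) (hε : ε ∈ Set.Ioo (0 : ℝ) 1) :
    Tindex (ENNReal.ofReal (1 - ε) • Measure.dirac (0 : ℝ)
        + ENNReal.ofReal ε • Measure.dirac (m / ε)) = 1 - ε ∧
      sSup {t : ℝ | ∃ μ : Measure ℝ, IsProbabilityMeasure μ ∧ μ {x : ℝ | x < 0} = 0 ∧
          Integrable (fun x : ℝ => x) μ ∧ 0 < ∫ x, x ∂μ ∧ t = Tindex μ} = 1 ∧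
      (1 : ℝ) ∉ {t : ℝ | ∃ μ : Measure ℝ, IsProbabilityMeasure μ ∧ μ {x : ℝ | x < 0} = 0 ∧
          Integrable (fun x : ℝ => x) μ ∧ 0 < ∫ x, x ∂μ ∧ t = Tindex μ} := by
  set S := {t : ℝ | ∃ μ : Measure ℝ, IsProbabilityMeasure μ ∧ μ {x : ℝ | x < 0} = 0 ∧
      Integrable (fun x : ℝ => x) μ ∧ 0 < ∫ x, x ∂μ ∧ t = Tindex μ} with hS
  have hub : ∀ t ∈ S, t ≤ 1 := by
    rintro t ⟨μ, h1, h2, h3, h4, rfl⟩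
    exact (T_lt_one μ h1 h2 h3 h4).le
  have hbdd : BddAbove S := ⟨1, hub⟩
  have hmem : ∀ η : ℝ, η ∈ Set.Ioo (0:ℝ) 1 → (1 - η) ∈ S := fun η hη =>
    two_point_mem 1 η one_pos hη
  have hne : S.Nonempty := ⟨1 - (1/2 : ℝ), hmem (1/2) (by norm_num)⟩
  refine ⟨two_point_T m ε hm hε, ?_, ?_⟩
  · apply le_antisymm (csSup_le hne hub)
    by_contra hlt
    push_neg at hlt
    have hge : (1:ℝ) - 1/2 ≤ sSup S := le_csSup hbdd (hmem (1/2) (by norm_num))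
    set s := sSup S with hs
    have hs0 : (0:ℝ) < s := by linarith
    set η := (1 - s) / 2 with hη
    have hη0 : 0 < η := by simp only [hη]; linarith
    have hη1 : η < 1 := by simp only [hη]; linarith
    have : 1 - η ≤ s := le_csSup hbdd (hmem η ⟨hη0, hη1⟩)
    simp only [hη] at this
    linarith
  · rintro ⟨μ, h1, h2, h3, h4, heq⟩
    have := T_lt_one μ h1 h2 h3 h4
    rw [← heq] at this
    exact lt_irrefl _ this
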